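/- In the isosceles-triangle configuration (apex angle β, ∠A₁OA₂ = α ∈ (β, π], P on open segment V P̄, ϑ_A = ∠A₁PO, ϑ_B = ∠A₁PA₂): if ϑ_A ≥ β, then 2ϑ_B − ϑ_A < π. -/

import Mathlib

open Real EuclideanGeometry

set_option maxHeartbeats 1000000 in
/-- In the isosceles triangle `V A₂ A₁` with `|VA₁| = |VA₂|`, midpoint `H` of `A₁A₂`,
`O` on segment `VH` with `β = ∠A₁VA₂ < α = ∠A₁OA₂ ≤ π`, `P̄` the intersection of
lines `A₂O` and `VA₁`, and `P` on the open segment `V P̄`, the angles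
`ϑ_A = ∠A₁PO` and `ϑ_B = ∠A₁PA₂` satisfy: if `ϑ_A ≥ β` then `2ϑ_B − ϑ_A < π`. -/
theorem stmt9 (V A₁ A₂ H O Pbar P : EuclideanSpace ℝ (Fin 2)) (α β ϑA ϑB : ℝ)
    (hiso : dist V A₁ = dist V A₂)
    (hH : H = midpoint ℝ A₁ A₂)
    (hO : O ∈ segment ℝ V H)
    (hnd : V ∉ affineSpan ℝ ({A₁, A₂} : Set (EuclideanSpace ℝ (Fin 2))))
    (hβdef : β = ∠ A₁ V A₂)
    (hαdef : α = ∠ A₁ O A₂)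
    (hβpos : 0 < β) (hβα : β < α) (hαπ : α ≤ π)
    (hPbar₁ : Pbar ∈ affineSpan ℝ ({A₂, O} : Set (EuclideanSpace ℝ (Fin 2))))
    (hPbar₂ : Pbar ∈ affineSpan ℝ ({V, A₁} : Set (EuclideanSpace ℝ (Fin 2))))
    (hP : P ∈ openSegment ℝ V Pbar)
    (hϑA : ϑA = ∠ A₁ P O) (hϑB : ϑB = ∠ A₁ P A₂)
    (hAβ : β ≤ ϑA) :
    2 * ϑB - ϑA < π := by
  have hVA₁ : V ≠ A₁ := fun h => hnd (h ▸ mem_affineSpan ℝ (by simp))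
  have hVA₂ : V ≠ A₂ := fun h => hnd (h ▸ mem_affineSpan ℝ (by simp))
  have hA₁A₂ : A₁ ≠ A₂ := by
    intro h
    rw [← h, angle_self_of_ne (Ne.symm hVA₁)] at hβdef
    linarith
  set a : EuclideanSpace ℝ (Fin 2) := A₁ - V with ha
  set b : EuclideanSpace ℝ (Fin 2) := A₂ - V with hb
  -- linear independence of a, b
  have hli : ∀ x y : ℝ, x • a + y • b = 0 → x = 0 ∧ y = 0 := by
    intro x y h
    by_cases hxy : x + y = 0
    · have hy : y = -x := by linarith
      have h2 : x • (A₁ - A₂) = 0 := by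
        rw [show x • (A₁ - A₂) = x • a + (-x) • b by rw [ha, hb]; module, ← hy, h]
      rcases smul_eq_zero.1 h2 with hx0 | hv
      · exact ⟨hx0, by rw [hy, hx0, neg_zero]⟩
      · exact absurd (sub_eq_zero.1 hv) hA₁A₂
    · exfalso
      apply hnd
      have key : (x + y) • (V - A₁) = y • (A₂ - A₁) := by
        rw [show (x + y) • (V - A₁) = y • (A₂ - A₁) - (x • a + y • b) by rw [ha, hb]; module, h,
          sub_zero]
      have key2 : (y / (x + y)) • (A₂ - A₁) = V - A₁ := by
        have := congrArg (fun v => (x + y)⁻¹ • v) key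
        simp only [smul_smul, inv_mul_cancel₀ hxy, one_smul] at this
        rw [this, inv_mul_eq_div]
      have hmem := (vadd_left_mem_affineSpan_pair (k := ℝ) (p₁ := A₁) (p₂ := A₂)
        (v := V - A₁)).2 ⟨y / (x + y), by simpa [vsub_eq_sub] using key2⟩
      simpa [vadd_eq_add, sub_add_cancel] using hmem
  -- the parameter of O on the segment VH
  rw [segment_eq_image_lineMap] at hO
  obtain ⟨t, ⟨ht0, ht1⟩, hOeq⟩ := hO
  have hOV : O ≠ V := by
    intro h
    rw [h, ← hβdef] at hαdef
    linarith
  have ht0' : 0 < t := by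
    rcases lt_or_eq_of_le ht0 with h | h
    · exact h
    · exfalso; apply hOV; rw [← hOeq, ← h, AffineMap.lineMap_apply_zero]
  have hOv : O - V = (t / 2) • a + (t / 2) • b := by
    rw [← hOeq, AffineMap.lineMap_apply_module, hH, midpoint_eq_smul_add, invOf_eq_inv, ha, hb]
    module
  -- the parameter of Pbar on the line V A₁
  have hPbar₂' : ∃ s : ℝ, s • a = Pbar - V := by
    have h := hPbar₂
    rw [show Pbar = (Pbar - V) +ᵥ V by simp [vadd_eq_add]] at h
    obtain ⟨s, hs⟩ := (vadd_left_mem_affineSpan_pair (k := ℝ)).1 h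
    exact ⟨s, by simpa [vsub_eq_sub, ha] using hs⟩
  obtain ⟨s, hs⟩ := hPbar₂'
  have hPbar₁' : ∃ r : ℝ, r • (O - A₂) = Pbar - A₂ := by
    have h := hPbar₁
    rw [show Pbar = (Pbar - A₂) +ᵥ A₂ by simp [vadd_eq_add]] at h
    obtain ⟨r, hr⟩ := (vadd_left_mem_affineSpan_pair (k := ℝ)).1 h
    exact ⟨r, by simpa [vsub_eq_sub] using hr⟩
  obtain ⟨r, hr⟩ := hPbar₁'
  -- solve for s
  have hOA₂ : O - A₂ = (t / 2) • a + (t / 2 - 1) • b := by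
    rw [show O - A₂ = (O - V) - b from by rw [hb]; abel, hOv]; module
  have heq : (s - r * (t / 2)) • a + (r * (1 - t / 2) - 1) • b = 0 := by
    have h1 : s • a - b = r • (O - A₂) := by
      rw [hs, hb, hr]; abel
    rw [hOA₂] at h1
    rw [show (s - r * (t / 2)) • a + (r * (1 - t / 2) - 1) • b
        = (s • a - b) - r • ((t / 2) • a + (t / 2 - 1) • b) from by module, h1, sub_self]
  obtain ⟨he1, he2⟩ := hli _ _ heq
  have hr' : r * (1 - t / 2) = 1 := by linarith
  have hrpos : 0 < r := by nlinarith
  have hs0 : 0 < s := by nlinarith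
  have hs1 : s ≤ 1 := by nlinarith
  -- the parameter of P
  rw [openSegment_eq_image_lineMap] at hP
  obtain ⟨u, ⟨hu0, hu1⟩, hPeq⟩ := hP
  set w : ℝ := u * s with hwdef
  have hw0 : 0 < w := mul_pos hu0 hs0
  have hw1 : w < 1 := by nlinarith
  have hPv : P - V = w • a := by
    rw [← hPeq, AffineMap.lineMap_apply_module, hwdef, ← smul_smul, hs]
    module
  have hPw : P = AffineMap.lineMap V A₁ w := by
    rw [AffineMap.lineMap_apply_module,
      show (1 - w) • V + w • A₁ = w • (A₁ - V) + V from by module, ← ha, ← hPv]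
    abel
  have hsb : Sbtw ℝ V P A₁ := by
    rw [hPw]; exact sbtw_lineMap_iff.2 ⟨hVA₁, ⟨hw0, hw1⟩⟩
  have hPA₁ : A₁ ≠ P := hsb.right_ne
  have hPA₂ : A₂ ≠ P := by
    intro h
    have : w • a + (-1 : ℝ) • b = 0 := by
      rw [← hPv, hb, h]; module
    exact absurd (hli _ _ this).2 (by norm_num)
  -- key angle facts
  have hang1 : ∠ A₂ A₁ P = ∠ A₂ A₁ V :=
    angle_eq_angle_of_angle_eq_pi A₂ hsb.angle₃₂₁_eq_pi
  have hiso' : ∠ V A₁ A₂ = ∠ V A₂ A₁ := angle_eq_angle_of_dist_eq hiso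
  have tri1 : ∠ V A₁ A₂ + ∠ A₁ A₂ V + ∠ A₂ V A₁ = π :=
    angle_add_angle_add_angle_eq_pi A₂ (Ne.symm hVA₁)
  have tri2 : ∠ P A₁ A₂ + ∠ A₁ A₂ P + ∠ A₂ P A₁ = π :=
    angle_add_angle_add_angle_eq_pi A₂ hPA₁
  -- the angle ∠ A₁ A₂ P is positive
  have hδpos : 0 < ∠ A₁ A₂ P := by
    rcases lt_or_eq_of_le (angle_nonneg A₁ A₂ P) with h | h
    · exact h
    · exfalso
      have h' : InnerProductGeometry.angle (A₁ -ᵥ A₂) (P -ᵥ A₂) = 0 := h.symm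
      rw [InnerProductGeometry.angle_eq_zero_iff] at h'
      obtain ⟨-, q, hq0, hq⟩ := h'
      have hq' : (w - q) • a + (q - 1) • b = 0 := by
        have h1 : P - A₂ = q • (A₁ - A₂) := by simpa [vsub_eq_sub] using hq
        have h2 : P - A₂ = w • a - b := by
          rw [show P - A₂ = (P - V) - b from by rw [hb]; abel, hPv]
        rw [show (w - q) • a + (q - 1) • b = (w • a - b) - q • (A₁ - A₂) from by
          rw [ha, hb]; module, ← h2, h1, sub_self]
      obtain ⟨hh1, hh2⟩ := hli _ _ hq'
      have : q = 1 := by linarith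
      have : w = 1 := by linarith
      linarith
  -- conclude
  have hγ : ∠ P A₁ A₂ = ∠ V A₁ A₂ := by
    rw [angle_comm P A₁ A₂, hang1, angle_comm A₂ A₁ V]
  have hc1 : ∠ A₁ A₂ V = ∠ V A₂ A₁ := angle_comm _ _ _
  have hc2 : ∠ A₂ V A₁ = β := by rw [angle_comm, ← hβdef]
  have hc3 : ∠ A₂ P A₁ = ϑB := by rw [angle_comm, ← hϑB]
  linarith [tri1, tri2]
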